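/- Let L be a finite distributive lattice, P its join-irreducible poset, and v_a ∈ ℝ^P the vertex of the order polytope corresponding to a ∈ L. Suppose tuples (a_1,...,a_k) and (b_1,...,b_k) of elements of L satisfy Σ v_{a_j} = Σ v_{b_j}. If for some parts O(P,<_1), O(P,<_2) of a polyhedral subdivision of O(P,<) into order polytopes, all v_{a_j} are vertices of O(P,<_1) and all v_{b_j} are vertices of O(P,<_2), then all v_{a_j} and all v_{b_j} lie in O(P,<_1) ∩ O(P,<_2). -/

import Mathlib

/-- The poset of join-irreducible elements of `L`. -/
abbrev JI (L : Type*) [Lattice L] := {p : L // SupIrred p}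

open Classical in
/-- The vertex of the order polytope associated with `a ∈ L`. -/
noncomputable def vtx {L : Type*} [Lattice L] (a : L) : JI L → ℝ :=
  fun p => if (p : L) ≤ a then 1 else 0

/-- The order polytope of a (strict) order relation `lt` on the join-irreducibles. -/
def orderPolytope {P : Type*} [Fintype P] (lt : P → P → Prop) : Set (P → ℝ) :=
  {x | (∀ p, 0 ≤ x p ∧ x p ≤ 1) ∧ ∀ p q, lt p q → x q ≤ x p}

lemma orderPolytope_convex {P : Type*} [Fintype P] (lt : P → P → Prop) :
    Convex ℝ (orderPolytope lt) := by
  intro x hx y hy s t hs ht hst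
  constructor
  · intro p
    have h1 := (hx.1 p).1; have h2 := (hx.1 p).2
    have h3 := (hy.1 p).1; have h4 := (hy.1 p).2
    constructor
    · simp only [Pi.add_apply, Pi.smul_apply, smul_eq_mul]
      nlinarith
    · simp only [Pi.add_apply, Pi.smul_apply, smul_eq_mul]
      nlinarith
  · intro p q hpq
    have h1 := hx.2 p q hpq
    have h2 := hy.2 p q hpq
    simp only [Pi.add_apply, Pi.smul_apply, smul_eq_mul]
    nlinarith

lemma mean_extreme {E : Type*} [AddCommGroup E] [Module ℝ E] {C F : Set E}
    (hC : Convex ℝ C) (hF : IsExtreme ℝ C F) :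
    ∀ (n : ℕ) (y : Fin n → E), (∀ j, y j ∈ C) →
      ((n : ℝ)⁻¹ • ∑ j, y j ∈ F) → ∀ j, y j ∈ F := by
  intro n
  induction n with
  | zero => intro y _ _ j; exact j.elim0
  | succ m ih =>
    intro y hy hm j
    rcases Nat.eq_zero_or_pos m with rfl | hm0
    · have : y j = (((0:ℕ)+1 : ℝ))⁻¹ • ∑ j, y j := by
        simp [Fin.sum_univ_one, Fin.eq_zero j]
      rw [this] at *
      simpa using hm
    · have hmpos : (0:ℝ) < m := by exact_mod_cast hm0
      set S : E := ∑ i : Fin m, y i.castSucc with hS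
      have hz : (m:ℝ)⁻¹ • S ∈ C := by
        rw [hS, Finset.smul_sum]
        apply hC.sum_mem (fun i _ => by positivity)
        · simp [Finset.sum_const, Finset.card_univ]
          field_simp
        · intro i _; exact hy _
      have hseg : (((m:ℝ)+1))⁻¹ • ∑ j, y j ∈
          openSegment ℝ ((m:ℝ)⁻¹ • S) (y (Fin.last m)) := by
        refine ⟨(m:ℝ)/((m:ℝ)+1), 1/((m:ℝ)+1), by positivity, by positivity, by field_simp, ?_⟩
        rw [Fin.sum_univ_castSucc, ← hS, smul_smul, smul_add]
        congr 1
        · congr 1; field_simp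
        · congr 1; field_simp
      have hm' : (((m:ℝ)+1))⁻¹ • ∑ j, y j ∈ F := by
        convert hm using 3
        push_cast
        ring
      have := And.intro (hF.2 hz (hy (Fin.last m)) hm' hseg)
        (hF.2 (hy (Fin.last m)) hz hm' (by rw [openSegment_symm]; exact hseg))
      refine Fin.lastCases this.2 (fun i => ?_) j
      exact ih (fun i => y i.castSucc) (fun i => hy _) this.1 i

/-- If tuples `(a_1,…,a_k)`, `(b_1,…,b_k)` in `L` satisfy `Σ v_{a_j} = Σ v_{b_j}`, all
`v_{a_j}` are vertices of a part `O(P,<_1)` and all `v_{b_j}` are vertices of a part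
`O(P,<_2)` of a polyhedral subdivision of `O(P,<)` into order polytopes, then all these
points lie in `O(P,<_1) ∩ O(P,<_2)`. -/
theorem stmt15 {L : Type*} [DistribLattice L] [Fintype L] [OrderBot L]
    [DecidablePred (SupIrred : L → Prop)]
    (lt1 lt2 : JI L → JI L → Prop)
    (h1 : IsStrictOrder (JI L) lt1) (h2 : IsStrictOrder (JI L) lt2)
    (hs1 : ∀ p q : JI L, p < q → lt1 p q) (hs2 : ∀ p q : JI L, p < q → lt2 p q)
    (hface1 : IsExtreme ℝ (orderPolytope lt1) (orderPolytope lt1 ∩ orderPolytope lt2))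
    (hface2 : IsExtreme ℝ (orderPolytope lt2) (orderPolytope lt1 ∩ orderPolytope lt2))
    (k : ℕ) (a b : Fin k → L)
    (hsum : ∑ j, vtx (a j) = ∑ j, vtx (b j))
    (ha : ∀ j, vtx (a j) ∈ Set.extremePoints ℝ (orderPolytope lt1))
    (hb : ∀ j, vtx (b j) ∈ Set.extremePoints ℝ (orderPolytope lt2)) :
    (∀ j, vtx (a j) ∈ orderPolytope lt1 ∩ orderPolytope lt2) ∧
    (∀ j, vtx (b j) ∈ orderPolytope lt1 ∩ orderPolytope lt2) := by
  rcases Nat.eq_zero_or_pos k with rfl | hk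
  · exact ⟨fun j => j.elim0, fun j => j.elim0⟩
  have hkpos : (0:ℝ) < k := by exact_mod_cast hk
  have haP : ∀ j, vtx (a j) ∈ orderPolytope lt1 := fun j => (ha j).1
  have hbP : ∀ j, vtx (b j) ∈ orderPolytope lt2 := fun j => (hb j).1
  have hmean : ∀ (lt : JI L → JI L → Prop) (c : Fin k → L),
      (∀ j, vtx (c j) ∈ orderPolytope lt) → (k:ℝ)⁻¹ • ∑ j, vtx (c j) ∈ orderPolytope lt := by
    intro lt c hc
    rw [Finset.smul_sum]
    apply (orderPolytope_convex lt).sum_mem (fun i _ => by positivity)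
    · simp [Finset.sum_const, Finset.card_univ]
      field_simp
    · intro i _; exact hc i
  have hmF : (k:ℝ)⁻¹ • ∑ j, vtx (a j) ∈ orderPolytope lt1 ∩ orderPolytope lt2 := by
    refine ⟨hmean lt1 a haP, ?_⟩
    rw [hsum]; exact hmean lt2 b hbP
  constructor
  · exact mean_extreme (orderPolytope_convex lt1) hface1 k (fun j => vtx (a j)) haP hmF
  · have hmF' : (k:ℝ)⁻¹ • ∑ j, vtx (b j) ∈ orderPolytope lt1 ∩ orderPolytope lt2 := by
      rwa [← hsum]
    exact mean_extreme (orderPolytope_convex lt2) hface2 k (fun j => vtx (b j)) hbP hmF'
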